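/- The value of any convergent infinite even-integer continued fraction is never an ∞-rational: it is either irrational or a rational p/q in lowest terms with p and q both odd. -/

import Mathlib

open Filter Topology OnePoint

/-- Inverse on ℚ ∪ {∞} (`Option.none` = ∞): 1/∞ = 0 and 1/0 = ∞. -/
def cfInv : Option ℚ → Option ℚ
  | Option.none => Option.some 0
  | Option.some q => if q = 0 then Option.none else Option.some q⁻¹

/-- Value of the finite continued fraction [b₁,…,bₙ] in ℚ ∪ {∞},
with `cfVal [] = Option.none` (that is, ∞). -/
def cfVal : List ℤ → Option ℚ
  | [] => Option.none
  | b :: t => (cfInv (cfVal t)).map (fun q => (b : ℚ) + q)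

/-- Embed ℚ ∪ {∞} into the extended real line ℝ ∪ {∞}. -/
def toOP : Option ℚ → OnePoint ℝ
  | Option.none => ∞
  | Option.some q => ((q : ℝ) : OnePoint ℝ)

/-- The n-th convergent (value of the first n+1 terms) of the continued fraction
with coefficients `b 0, b 1, …`. -/
def cfConv (b : ℕ → ℤ) (n : ℕ) : Option ℚ := cfVal ((List.range (n + 1)).map b)

/-- `b 0, b 1, …` is an even-integer continued fraction. -/
def IsEICF (b : ℕ → ℤ) : Prop := (∀ i, Even (b i)) ∧ ∀ i ≥ 1, b i ≠ 0

/-- The even-integer continued fraction `b` is an expansion of `x`: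
its convergents tend to `x` in the extended real line. -/
def IsEICFExpansion (b : ℕ → ℤ) (x : OnePoint ℝ) : Prop :=
  IsEICF b ∧ Tendsto (fun n => toOP (cfConv b n)) atTop (𝓝 x)


def mB (a : ℤ) : Matrix (Fin 2) (Fin 2) ℤ := !![a, 1; 1, 0]

def mL (l : List ℤ) : Matrix (Fin 2) (Fin 2) ℤ := (l.map mB).prod

lemma mL_nil : mL [] = 1 := rfl

lemma mL_cons (a : ℤ) (l : List ℤ) : mL (a :: l) = mB a * mL l := by
  simp [mL]

lemma mL_append (l : List ℤ) (a : ℤ) : mL (l ++ [a]) = mL l * mB a := by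
  simp [mL]

lemma mL_det (l : List ℤ) : (mL l).det = (-1) ^ l.length := by
  induction l with
  | nil => simp [mL_nil]
  | cons a t ih =>
    rw [mL_cons, Matrix.det_mul, ih]
    simp [mB, Matrix.det_fin_two_of]
    ring

lemma mL_cons_entries (a : ℤ) (l : List ℤ) :
    mL (a :: l) 0 0 = a * mL l 0 0 + mL l 1 0 ∧ mL (a :: l) 1 0 = mL l 0 0 := by
  rw [mL_cons]
  constructor <;> simp [mB, Matrix.mul_apply, Fin.sum_univ_two]

lemma cfVal_eq (l : List ℤ) :
    cfVal l = if mL l 1 0 = 0 then Option.none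
      else Option.some ((mL l 0 0 : ℚ) / (mL l 1 0 : ℚ)) := by
  induction l with
  | nil =>
    have h : mL [] 1 0 = 0 := by simp [mL_nil, Matrix.one_apply]
    simp [cfVal, h]
  | cons a t ih =>
    obtain ⟨h00, h10⟩ := mL_cons_entries a t
    by_cases hd : mL t 1 0 = 0
    · have hn : mL t 0 0 ≠ 0 := by
        intro h0
        have := mL_det t
        rw [Matrix.det_fin_two, h0, hd] at this
        simp at this
        exact absurd this.symm (by positivity)
      have : cfVal t = Option.none := by rw [ih]; simp [hd]
      rw [cfVal, this]
      simp only [cfInv, Option.map_some]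
      rw [if_neg (by rw [h10]; exact hn)]
      rw [h00, h10, hd]
      push_cast
      rw [eq_comm]
      field_simp
      congr 1
      have h1 : (mL t 0 0 : ℚ) ≠ 0 := by exact_mod_cast hn
      field_simp
      ring
    · have hct : cfVal t = Option.some ((mL t 0 0 : ℚ) / (mL t 1 0 : ℚ)) := by
        rw [ih]; simp [hd]
      by_cases hn : mL t 0 0 = 0
      · have : ((mL t 0 0 : ℚ) / (mL t 1 0 : ℚ)) = 0 := by rw [hn]; simp
        rw [cfVal, hct]
        simp [cfInv, this, h10, hn]

      · have hq : ((mL t 0 0 : ℚ) / (mL t 1 0 : ℚ)) ≠ 0 := by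
          apply div_ne_zero <;> exact_mod_cast ‹_›
        rw [cfVal, hct]
        simp only [cfInv, if_neg hq, Option.map_some]
        rw [if_neg (by rw [h10]; exact hn)]
        congr 1
        rw [h00, h10]
        have h1 : (mL t 0 0 : ℚ) ≠ 0 := by exact_mod_cast hn
        have h2 : (mL t 1 0 : ℚ) ≠ 0 := by exact_mod_cast hd
        push_cast
        rw [inv_div]
        field_simp

def cmat (b : ℕ → ℤ) (n : ℕ) : Matrix (Fin 2) (Fin 2) ℤ :=
  mL ((List.range (n + 1)).map b)

lemma cmat_zero (b : ℕ → ℤ) : cmat b 0 = mB (b 0) := by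
  unfold cmat mL
  simp [List.range_succ]

lemma cmat_succ (b : ℕ → ℤ) (n : ℕ) :
    cmat b (n + 1) = cmat b n * mB (b (n + 1)) := by
  rw [cmat, List.range_succ, List.map_append]
  simp [cmat, ← mL_append, mL]

lemma cmat_succ_entries (b : ℕ → ℤ) (n : ℕ) :
    cmat b (n+1) 0 0 = b (n+1) * cmat b n 0 0 + cmat b n 0 1 ∧
    cmat b (n+1) 0 1 = cmat b n 0 0 ∧
    cmat b (n+1) 1 0 = b (n+1) * cmat b n 1 0 + cmat b n 1 1 ∧
    cmat b (n+1) 1 1 = cmat b n 1 0 := by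
  rw [cmat_succ]
  refine ⟨?_, ?_, ?_, ?_⟩ <;> simp [mB, Matrix.mul_apply, Fin.sum_univ_two] <;> ring

lemma cmat_zero_entries (b : ℕ → ℤ) :
    cmat b 0 0 0 = b 0 ∧ cmat b 0 0 1 = 1 ∧ cmat b 0 1 0 = 1 ∧ cmat b 0 1 1 = 0 := by
  rw [cmat_zero]
  refine ⟨?_, ?_, ?_, ?_⟩ <;> simp [mB]

lemma cmat_det (b : ℕ → ℤ) (n : ℕ) :
    cmat b n 0 0 * cmat b n 1 1 - cmat b n 0 1 * cmat b n 1 0 = (-1) ^ (n + 1) := by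
  have := mL_det ((List.range (n + 1)).map b)
  rw [← cmat, Matrix.det_fin_two] at this
  simpa using this

/-- cross determinant of consecutive convergents -/
lemma cmat_cross (b : ℕ → ℤ) (n : ℕ) :
    cmat b (n+1) 0 0 * cmat b n 1 0 - cmat b n 0 0 * cmat b (n+1) 1 0 = (-1) ^ n := by
  obtain ⟨h1, h2, h3, h4⟩ := cmat_succ_entries b n
  rw [h1, h3]
  have := cmat_det b n
  have : cmat b n 0 1 * cmat b n 1 0 - cmat b n 0 0 * cmat b n 1 1 = -(-1) ^ (n+1) := by
    linarith [cmat_det b n]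
  calc (b (n+1) * cmat b n 0 0 + cmat b n 0 1) * cmat b n 1 0 -
      cmat b n 0 0 * (b (n+1) * cmat b n 1 0 + cmat b n 1 1)
      = cmat b n 0 1 * cmat b n 1 0 - cmat b n 0 0 * cmat b n 1 1 := by ring
    _ = -(-1) ^ (n+1) := this
    _ = (-1) ^ n := by ring

section growth

lemma abs_rec_ge (x y c : ℤ) (hc : 2 ≤ |c|) : 2 * |x| - |y| ≤ |c * x + y| := by
  have h1 := abs_sub_abs_le_abs_sub (c * x) (-y)
  simp only [sub_neg_eq_add, abs_neg] at h1
  have h2 : |c * x| = |c| * |x| := abs_mul _ _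
  nlinarith [abs_nonneg x, abs_nonneg y, mul_le_mul_of_nonneg_right hc (abs_nonneg x)]

/-- |q'| < |q| -/
lemma q_gap (b : ℕ → ℤ) (hb : ∀ i ≥ 1, 2 ≤ |b i|) :
    ∀ n, |cmat b n 1 1| + 1 ≤ |cmat b n 1 0| := by
  intro n
  induction n with
  | zero =>
    obtain ⟨_, _, h3, h4⟩ := cmat_zero_entries b
    rw [h3, h4]; norm_num
  | succ n ih =>
    obtain ⟨_, _, h3, h4⟩ := cmat_succ_entries b n
    rw [h3, h4]
    have := abs_rec_ge (cmat b n 1 0) (cmat b n 1 1) (b (n+1)) (hb (n+1) (by omega))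
    linarith

lemma q_succ_ge (b : ℕ → ℤ) (hb : ∀ i ≥ 1, 2 ≤ |b i|) :
    ∀ n, |cmat b n 1 0| + 1 ≤ |cmat b (n+1) 1 0| := by
  intro n
  obtain ⟨_, _, h3, h4⟩ := cmat_succ_entries b n
  rw [h3]
  have hg := q_gap b hb n
  have := abs_rec_ge (cmat b n 1 0) (cmat b n 1 1) (b (n+1)) (hb (n+1) (by omega))
  linarith

lemma q_lb (b : ℕ → ℤ) (hb : ∀ i ≥ 1, 2 ≤ |b i|) :
    ∀ n : ℕ, (n + 1 : ℤ) ≤ |cmat b n 1 0| := by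
  intro n
  induction n with
  | zero => obtain ⟨_, _, h3, _⟩ := cmat_zero_entries b; rw [h3]; norm_num
  | succ n ih =>
    have := q_succ_ge b hb n
    push_cast
    push_cast at ih
    omega

lemma q_ne (b : ℕ → ℤ) (hb : ∀ i ≥ 1, 2 ≤ |b i|) (n : ℕ) : cmat b n 1 0 ≠ 0 := by
  have := q_lb b hb n
  intro h
  rw [h] at this
  simp at this
  omega

end growth

noncomputable def xR (b : ℕ → ℤ) (n : ℕ) : ℝ :=
  (cmat b n 0 0 : ℝ) / (cmat b n 1 0 : ℝ)

lemma cmat_def (b : ℕ → ℤ) (n : ℕ) : mL (List.map b (List.range (n+1))) = cmat b n := rfl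

lemma cfConv_eq (b : ℕ → ℤ) (hb : ∀ i ≥ 1, 2 ≤ |b i|) (n : ℕ) :
    cfConv b n = Option.some ((cmat b n 0 0 : ℚ) / (cmat b n 1 0 : ℚ)) := by
  rw [cfConv, cfVal_eq, cmat_def, if_neg (q_ne b hb n)]

lemma toOP_cfConv (b : ℕ → ℤ) (hb : ∀ i ≥ 1, 2 ≤ |b i|) (n : ℕ) :
    toOP (cfConv b n) = ((xR b n : ℝ) : OnePoint ℝ) := by
  rw [cfConv_eq b hb n, toOP, xR]
  push_cast
  rfl

section conv
variable (b : ℕ → ℤ)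

lemma qR_pos (hb : ∀ i ≥ 1, 2 ≤ |b i|) (n : ℕ) :
    (n + 1 : ℝ) ≤ |(cmat b n 1 0 : ℝ)| := by
  have := q_lb b hb n
  calc (n + 1 : ℝ) = ((n + 1 : ℤ) : ℝ) := by push_cast; ring
    _ ≤ |(cmat b n 1 0 : ℤ)| := by exact_mod_cast this
    _ = |(cmat b n 1 0 : ℝ)| := by push_cast; ring

lemma qR_ne (hb : ∀ i ≥ 1, 2 ≤ |b i|) (n : ℕ) : (cmat b n 1 0 : ℝ) ≠ 0 := by
  exact_mod_cast q_ne b hb n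

lemma step_bound (hb : ∀ i ≥ 1, 2 ≤ |b i|) (n : ℕ) :
    |xR b (n+1) - xR b n| ≤
      1 / |(cmat b n 1 0 : ℝ)| - 1 / |(cmat b (n+1) 1 0 : ℝ)| := by
  have hq : (cmat b n 1 0 : ℝ) ≠ 0 := qR_ne b hb n
  have hq1 : (cmat b (n+1) 1 0 : ℝ) ≠ 0 := qR_ne b hb (n+1)
  have hgap : |(cmat b n 1 0 : ℝ)| + 1 ≤ |(cmat b (n+1) 1 0 : ℝ)| := by
    have := q_succ_ge b hb n
    calc |(cmat b n 1 0 : ℝ)| + 1 = ((|cmat b n 1 0| + 1 : ℤ) : ℝ) := by push_cast; ring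
      _ ≤ ((|cmat b (n+1) 1 0| : ℤ) : ℝ) := by exact_mod_cast this
      _ = |(cmat b (n+1) 1 0 : ℝ)| := by push_cast; ring
  have h1 : (1:ℝ) ≤ |(cmat b n 1 0 : ℝ)| := by
    have := qR_pos b hb n
    nlinarith [Nat.cast_nonneg (α := ℝ) n]
  have hdiff : xR b (n+1) - xR b n =
      ((cmat b (n+1) 0 0 * cmat b n 1 0 - cmat b n 0 0 * cmat b (n+1) 1 0 : ℤ) : ℝ) /
        ((cmat b n 1 0 : ℝ) * (cmat b (n+1) 1 0 : ℝ)) := by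
    rw [xR, xR]
    push_cast
    field_simp
  have hcross : |((cmat b (n+1) 0 0 * cmat b n 1 0 - cmat b n 0 0 * cmat b (n+1) 1 0 : ℤ) : ℝ)| = 1 := by
    rw [cmat_cross b n]
    push_cast
    simp [abs_pow]
  have habs : |xR b (n+1) - xR b n| = 1 / (|(cmat b n 1 0 : ℝ)| * |(cmat b (n+1) 1 0 : ℝ)|) := by
    rw [hdiff, abs_div, hcross, abs_mul]
  rw [habs]
  have hqpos : (0:ℝ) < |(cmat b n 1 0 : ℝ)| := by linarith
  have hq1pos : (0:ℝ) < |(cmat b (n+1) 1 0 : ℝ)| := by linarith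
  have key : 1 / (|(cmat b n 1 0 : ℝ)| * |(cmat b (n+1) 1 0 : ℝ)|) ≤
      (|(cmat b (n+1) 1 0 : ℝ)| - |(cmat b n 1 0 : ℝ)|) /
        (|(cmat b n 1 0 : ℝ)| * |(cmat b (n+1) 1 0 : ℝ)|) := by
    gcongr
    linarith
  calc 1 / (|(cmat b n 1 0 : ℝ)| * |(cmat b (n+1) 1 0 : ℝ)|) ≤ _ := key
    _ = 1 / |(cmat b n 1 0 : ℝ)| - 1 / |(cmat b (n+1) 1 0 : ℝ)| := by
        field_simp

lemma tele_bound (hb : ∀ i ≥ 1, 2 ≤ |b i|) (n : ℕ) :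
    ∀ m, n ≤ m → |xR b m - xR b n| ≤
      1 / |(cmat b n 1 0 : ℝ)| - 1 / |(cmat b m 1 0 : ℝ)| := by
  intro m hm
  induction m, hm using Nat.le_induction with
  | base => simp
  | succ m hm ih =>
    have h1 := step_bound b hb m
    calc |xR b (m+1) - xR b n| ≤ |xR b (m+1) - xR b m| + |xR b m - xR b n| := by
          have := abs_add_le (xR b (m+1) - xR b m) (xR b m - xR b n)
          simpa using this
      _ ≤ _ := by linarith

lemma cauchy_xR (hb : ∀ i ≥ 1, 2 ≤ |b i|) : CauchySeq (xR b) := by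
  refine cauchySeq_of_le_tendsto_0 (fun N => 2 / ((N : ℝ) + 1)) ?_ ?_
  · intro n m N hn hm
    have hb1 : |xR b n - xR b N| ≤ 1 / |(cmat b N 1 0 : ℝ)| := by
      have := tele_bound b hb N n hn
      have h2 : 0 ≤ 1 / |(cmat b n 1 0 : ℝ)| := by positivity
      linarith
    have hb2 : |xR b m - xR b N| ≤ 1 / |(cmat b N 1 0 : ℝ)| := by
      have := tele_bound b hb N m hm
      have h2 : 0 ≤ 1 / |(cmat b m 1 0 : ℝ)| := by positivity
      linarith
    have hN : ((N:ℝ) + 1 : ℝ) ≤ |(cmat b N 1 0 : ℝ)| := qR_pos b hb N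
    have hNpos : (0:ℝ) < (N:ℝ) + 1 := by positivity
    have h3 : 1 / |(cmat b N 1 0 : ℝ)| ≤ 1 / ((N:ℝ) + 1) :=
      one_div_le_one_div_of_le hNpos hN
    rw [Real.dist_eq]
    calc |xR b n - xR b m| ≤ |xR b n - xR b N| + |xR b N - xR b m| := abs_sub_le _ _ _
      _ ≤ 1 / |(cmat b N 1 0 : ℝ)| + 1 / |(cmat b N 1 0 : ℝ)| := by
          rw [abs_sub_comm (xR b N) (xR b m)]; linarith
      _ ≤ 2 / ((N:ℝ) + 1) := by
          calc 1 / |(cmat b N 1 0 : ℝ)| + 1 / |(cmat b N 1 0 : ℝ)| ≤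
              1 / ((N:ℝ)+1) + 1/((N:ℝ)+1) := by linarith
            _ = 2 / ((N:ℝ)+1) := by ring
  · have h : Tendsto (fun n : ℕ => 1 / ((n : ℝ) + 1)) atTop (𝓝 0) := tendsto_one_div_add_atTop_nhds_zero_nat
    have h2 : (fun N : ℕ => 2 / ((N:ℝ) + 1)) = (fun N : ℕ => 2 * (1 / ((N:ℝ) + 1))) := by
      funext N; ring
    rw [h2]
    have := h.const_mul (2:ℝ)
    simpa using this

lemma lim_bound (hb : ∀ i ≥ 1, 2 ≤ |b i|) (r : ℝ)
    (hr : Tendsto (xR b) atTop (𝓝 r)) (n : ℕ) :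
    |r - xR b n| ≤ 1 / |(cmat b n 1 0 : ℝ)| := by
  have h1 : Tendsto (fun m => |xR b m - xR b n|) atTop (𝓝 |r - xR b n|) :=
    ((hr.sub_const (xR b n)).abs)
  apply le_of_tendsto h1
  filter_upwards [eventually_ge_atTop n] with m hm
  have := tele_bound b hb n m hm
  have h2 : 0 ≤ 1 / |(cmat b m 1 0 : ℝ)| := by positivity
  linarith

end conv

section parity
variable (b : ℕ → ℤ)

lemma par_sum (heven : ∀ i, Even (b i)) :
    ∀ n, Odd (cmat b n 0 0 + cmat b n 0 1) ∧ Odd (cmat b n 1 0 + cmat b n 1 1) := by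
  intro n
  induction n with
  | zero =>
    obtain ⟨h1, h2, h3, h4⟩ := cmat_zero_entries b
    rw [h1, h2, h3, h4]
    exact ⟨(heven 0).add_odd odd_one, by norm_num⟩
  | succ n ih =>
    obtain ⟨h1, h2, h3, h4⟩ := cmat_succ_entries b n
    rw [h1, h2, h3, h4]
    constructor
    · have e : b (n+1) * cmat b n 0 0 + cmat b n 0 1 + cmat b n 0 0
          = b (n+1) * cmat b n 0 0 + (cmat b n 0 0 + cmat b n 0 1) := by ring
      rw [e]
      exact ((heven (n+1)).mul_right _).add_odd ih.1
    · have e : b (n+1) * cmat b n 1 0 + cmat b n 1 1 + cmat b n 1 0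
          = b (n+1) * cmat b n 1 0 + (cmat b n 1 0 + cmat b n 1 1) := by ring
      rw [e]
      exact ((heven (n+1)).mul_right _).add_odd ih.2

lemma consec_sum_odd (heven : ∀ i, Even (b i)) (n : ℕ) :
    Odd (cmat b n 0 0 + cmat b (n+1) 0 0) ∧ Odd (cmat b n 1 0 + cmat b (n+1) 1 0) := by
  obtain ⟨h1, _, h3, _⟩ := cmat_succ_entries b n
  rw [h1, h3]
  constructor
  · have e : cmat b n 0 0 + (b (n+1) * cmat b n 0 0 + cmat b n 0 1)
        = b (n+1) * cmat b n 0 0 + (cmat b n 0 0 + cmat b n 0 1) := by ring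
    rw [e]
    exact ((heven (n+1)).mul_right _).add_odd (par_sum b heven n).1
  · have e : cmat b n 1 0 + (b (n+1) * cmat b n 1 0 + cmat b n 1 1)
        = b (n+1) * cmat b n 1 0 + (cmat b n 1 0 + cmat b n 1 1) := by ring
    rw [e]
    exact ((heven (n+1)).mul_right _).add_odd (par_sum b heven n).2

end parity

lemma odd_comb {A C S T : ℤ} (hAC : Odd (A + C)) (hS : Odd S) (hT : Odd T) :
    Odd (A * S - C * T) := by
  rcases Int.even_or_odd A with hA | hA
  · have hC : Odd C := by
      rcases Int.even_or_odd C with hC | hC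
      · exact absurd (hA.add hC) (by simpa [Int.not_even_iff_odd] using hAC)
      · exact hC
    exact (hA.mul_right S).sub_odd (hC.mul hT)
  · have hC : Even C := by
      rcases Int.even_or_odd C with hC | hC
      · exact hC
      · exact absurd (hA.add_odd hC) (by simpa [Int.not_even_iff_odd] using hAC)
    exact (hA.mul hS).sub_even (hC.mul_right T)

lemma key_rat (b : ℕ → ℤ) (heven : ∀ i, Even (b i)) (hb : ∀ i ≥ 1, 2 ≤ |b i|)
    (A C : ℤ) (hC : 0 < C) (hAC : Odd (A + C))
    (hbound : ∀ n, |A * cmat b n 1 0 - C * cmat b n 0 0| ≤ C) : False := by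
  set u : ℕ → ℤ := fun n => A * cmat b n 1 0 - C * cmat b n 0 0 with hu
  have hrec : ∀ n, u (n + 2) = b (n + 2) * u (n + 1) + u n := by
    intro n
    obtain ⟨h1, h2, h3, h4⟩ := cmat_succ_entries b (n+1)
    obtain ⟨h1', h2', h3', h4'⟩ := cmat_succ_entries b n
    simp only [hu]
    rw [h1, h3, h2', h4']
    ring
  -- step 1: |u (n+1)| ≤ |u n| for all n
  have hmono : ∀ n, |u (n + 1)| ≤ |u n| := by
    by_contra hcon
    push_neg at hcon
    obtain ⟨n, hn⟩ := hcon
    have hn' : |u n| + 1 ≤ |u (n+1)| := hn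
    have grow : ∀ j, |u (n + j)| + 1 ≤ |u (n + j + 1)| := by
      intro j
      induction j with
      | zero => simpa using hn'
      | succ j ih =>
        show |u (n + j + 1)| + 1 ≤ |u (n + j + 2)|
        have h5 := abs_rec_ge (u (n + j + 1)) (u (n + j)) (b (n + j + 2)) (hb _ (by omega))
        rw [← hrec (n + j)] at h5
        omega
    have grow2 : ∀ j : ℕ, |u (n + 1)| + j ≤ |u (n + 1 + j)| := by
      intro j
      induction j with
      | zero => simp
      | succ j ih =>
        have h5 := grow (1 + j)
        show |u (n + 1)| + ((j:ℤ) + 1) ≤ |u (n + 1 + j + 1)|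
        have e1 : n + (1 + j) = n + 1 + j := by omega
        rw [e1] at h5
        omega
    have hbound' : ∀ m, |u m| ≤ C := hbound
    have h1 := grow2 (C.toNat + 1)
    have h2 := hbound' (n + 1 + (C.toNat + 1))
    have h3 := hbound' (n + 1)
    push_cast at h1
    rw [Int.toNat_of_nonneg hC.le] at h1
    have := abs_nonneg (u (n+1))
    omega
  -- step 2: some consecutive pair has equal absolute values
  have heq : ∃ n, |u (n + 1)| = |u n| := by
    by_contra hcon
    push_neg at hcon
    have hdec : ∀ n, |u (n + 1)| + 1 ≤ |u n| := by
      intro n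
      have := hmono n
      have := hcon n
      omega
    have hlin : ∀ n : ℕ, |u n| + n ≤ |u 0| := by
      intro n
      induction n with
      | zero => simp
      | succ n ih =>
        have := hdec n
        push_cast
        push_cast at ih
        omega
    have := hlin ((|u 0|).toNat + 1)
    have h0 : (0:ℤ) ≤ |u 0| := abs_nonneg _
    have h1 : (0:ℤ) ≤ |u ((|u 0|).toNat + 1)| := abs_nonneg _
    push_cast at this
    rw [Int.toNat_of_nonneg h0] at this
    omega
  obtain ⟨n, hn⟩ := heq
  -- step 3: parity
  have hodd : Odd (u n + u (n + 1)) := by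
    have e : u n + u (n + 1) =
        A * (cmat b n 1 0 + cmat b (n+1) 1 0) - C * (cmat b n 0 0 + cmat b (n+1) 0 0) := by
      simp only [hu]; ring
    rw [e]
    obtain ⟨hp, hq⟩ := consec_sum_odd b heven n
    exact odd_comb hAC hq hp
  -- step 4: contradiction
  rcases abs_eq_abs.mp hn with h | h
  · have : Even (u n + u (n + 1)) := by
      rw [h]
      exact ⟨u n, by ring⟩
    exact (Int.not_even_iff_odd.mpr hodd) this
  · have : Even (u n + u (n + 1)) := by
      rw [h]
      exact ⟨0, by ring⟩
    exact (Int.not_even_iff_odd.mpr hodd) this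

/-- The value of a convergent infinite even-integer continued fraction is never an
∞-rational: it is either irrational or a 1-rational (reduced rational with odd
numerator and odd denominator). -/
theorem eicf_infinite_value_irrational_or_one_rational (b : ℕ → ℤ)
    (heven : ∀ i, Even (b i)) (hnz : ∀ i ≥ 1, b i ≠ 0) (x : OnePoint ℝ)
    (hx : Tendsto (fun n => toOP (cfConv b n)) atTop (𝓝 x)) :
    (∃ r : ℝ, x = (r : OnePoint ℝ) ∧ Irrational r) ∨
      (∃ q : ℚ, x = ((q : ℝ) : OnePoint ℝ) ∧ Odd q.num ∧ Odd (q.den : ℤ)) := by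
  have hb : ∀ i ≥ 1, 2 ≤ |b i| := by
    intro i hi
    obtain ⟨k, hk⟩ := heven i
    have hk2 : b i = 2 * k := by omega
    have hkne : k ≠ 0 := by
      intro h; exact hnz i hi (by rw [hk2, h, mul_zero])
    rw [hk2, abs_mul]
    have : 1 ≤ |k| := Int.one_le_abs (by exact_mod_cast hkne)
    calc (2:ℤ) = 2 * 1 := by ring
      _ ≤ |2| * |k| := by rw [show |(2:ℤ)| = 2 by norm_num]; nlinarith
  obtain ⟨r, hr⟩ := cauchySeq_tendsto_of_complete (cauchy_xR b hb)
  have hx' : Tendsto (fun n => ((xR b n : ℝ) : OnePoint ℝ)) atTop (𝓝 x) := by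
    have : (fun n => toOP (cfConv b n)) = fun n => ((xR b n : ℝ) : OnePoint ℝ) :=
      funext fun n => toOP_cfConv b hb n
    rwa [this] at hx
  have hlim : Tendsto (fun n => ((xR b n : ℝ) : OnePoint ℝ)) atTop (𝓝 ((r : ℝ) : OnePoint ℝ)) :=
    ((OnePoint.continuous_coe (X := ℝ)).tendsto r).comp hr
  have hxr : x = ((r : ℝ) : OnePoint ℝ) := tendsto_nhds_unique hx' hlim
  by_cases hrat : ∃ a : ℚ, (a : ℝ) = r
  · obtain ⟨a, ha⟩ := hrat
    right
    refine ⟨a, by rw [hxr, ha], ?_⟩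
    by_contra hcon
    set A : ℤ := a.num with hA
    set C : ℤ := (a.den : ℤ) with hCdef
    have hC : 0 < C := by positivity
    -- not both even (coprimality)
    have hne : ¬ (Even A ∧ Even C) := by
      rintro ⟨hEA, hEC⟩
      have h1 : (2:ℕ) ∣ a.num.natAbs := by
        have : Even a.num.natAbs := Int.natAbs_even.mpr hEA
        exact this.two_dvd
      have h2 : (2:ℕ) ∣ a.den := by
        have : Even a.den := by
          have : Even ((a.den : ℤ)) := hEC
          exact_mod_cast this
        exact this.two_dvd
      have := Nat.dvd_gcd h1 h2
      rw [a.reduced] at this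
      omega
    -- not both odd (assumption hcon)
    have hAC : Odd (A + C) := by
      rcases Int.even_or_odd A with hA' | hA'
      · rcases Int.even_or_odd C with hC' | hC'
        · exact absurd ⟨hA', hC'⟩ hne
        · exact hA'.add_odd hC'
      · rcases Int.even_or_odd C with hC' | hC'
        · exact hA'.add_even hC'
        · exact absurd ⟨hA', hC'⟩ hcon
    refine key_rat b heven hb A C hC hAC ?_
    intro n
    have hqne : (cmat b n 1 0 : ℝ) ≠ 0 := qR_ne b hb n
    have hrval : r = (A : ℝ) / (C : ℝ) := by
      rw [← ha, Rat.cast_def]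
      norm_num [hA, hCdef]
    have hlb := lim_bound b hb r hr n
    have hABS : |((A * cmat b n 1 0 - C * cmat b n 0 0 : ℤ) : ℝ)| ≤ (C : ℝ) := by
      have hCne : (C:ℝ) ≠ 0 := by positivity
      have heqq : ((A * cmat b n 1 0 - C * cmat b n 0 0 : ℤ) : ℝ)
          = (C : ℝ) * (cmat b n 1 0 : ℝ) * (r - xR b n) := by
        rw [hrval, xR]
        push_cast
        field_simp
      rw [heqq, abs_mul, abs_mul]
      have hCabs : |(C:ℝ)| = (C:ℝ) := abs_of_pos (by positivity)
      rw [hCabs]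
      have hqpos : 0 < |(cmat b n 1 0 : ℝ)| := abs_pos.mpr hqne
      calc (C:ℝ) * |(cmat b n 1 0 : ℝ)| * |r - xR b n|
          ≤ (C:ℝ) * |(cmat b n 1 0 : ℝ)| * (1 / |(cmat b n 1 0 : ℝ)|) := by
            apply mul_le_mul_of_nonneg_left hlb
            positivity
        _ = (C:ℝ) := by field_simp
    exact_mod_cast hABS
  · left
    refine ⟨r, hxr, ?_⟩
    intro ⟨q, hq⟩
    exact hrat ⟨q, hq⟩
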